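/- Let {a_k} be a nonnegative sequence and ε ∈ (0,1] such that Σ_{k=0}^∞ (k+1)^ε a_k < ∞. Then min_{0 ≤ j ≤ k} a_j = o(1/k^{1+ε}). -/
import Mathlib


open Filter Topology

theorem stmt12 (a : ℕ → ℝ) (ε : ℝ) (hε : 0 < ε) (hε1 : ε ≤ 1)
    (ha : ∀ k, 0 ≤ a k)
    (hsum : Summable (fun k : ℕ => ((k : ℝ) + 1) ^ ε * a k)) :
    Tendsto (fun k : ℕ => (k : ℝ) ^ (1 + ε) * (Finset.range (k + 1)).inf' ⟨0, by simp⟩ a)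
      atTop (𝓝 0) := by
  set h : ℕ → ℝ := fun k => ((k : ℝ) + 1) ^ ε * a k with hh
  have hh0 : ∀ k, 0 ≤ h k := fun k =>
    mul_nonneg (Real.rpow_nonneg (by positivity) ε) (ha k)
  have hg : Tendsto (fun n : ℕ => (4 : ℝ) * ∑' j, h (j + n / 2)) atTop (𝓝 0) := by
    have h1 : Tendsto (fun n : ℕ => n / 2) atTop atTop :=
      tendsto_atTop_atTop.mpr fun b => ⟨2 * b + 1, fun n hn => by omega⟩
    have h2 := (tendsto_sum_nat_add h).comp h1
    simpa using h2.const_mul (4 : ℝ)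
  apply squeeze_zero' (g := fun n : ℕ => (4 : ℝ) * ∑' j, h (j + n / 2)) _ _ hg
  · filter_upwards [] with k
    exact mul_nonneg (Real.rpow_nonneg (Nat.cast_nonneg k) _)
      (Finset.le_inf' _ _ fun j _ => ha j)
  · filter_upwards [eventually_ge_atTop 1] with k hk1
    set n := k / 2 with hn
    set m := (Finset.range (k + 1)).inf' ⟨0, by simp⟩ a with hm
    have hm0 : 0 ≤ m := Finset.le_inf' _ _ fun j _ => ha j
    have hk0 : (0 : ℝ) < (k : ℝ) := by exact_mod_cast hk1
    have hk2 : (0 : ℝ) < (k : ℝ) / 2 := by linarith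
    -- per-term bound
    have hterm : ∀ i ∈ Finset.range (k - n + 1), ((k : ℝ)/2) ^ ε * m ≤ h (i + n) := by
      intro i hi
      simp only [Finset.mem_range] at hi
      have hik : i + n ≤ k := by omega
      have hbase : (k : ℝ)/2 ≤ ((i + n : ℕ) : ℝ) + 1 := by
        have : k ≤ 2 * (i + n) + 2 := by omega
        have : (k : ℝ) ≤ 2 * ((i + n : ℕ) : ℝ) + 2 := by exact_mod_cast this
        linarith
      have h1 : ((k : ℝ)/2) ^ ε ≤ (((i + n : ℕ) : ℝ) + 1) ^ ε :=
        Real.rpow_le_rpow (by linarith) hbase hε.le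
      have h2 : m ≤ a (i + n) :=
        Finset.inf'_le _ (by simp only [Finset.mem_range]; omega)
      exact mul_le_mul h1 h2 hm0 (Real.rpow_nonneg (by positivity) _)
    have hcard : ((k : ℝ)/2) ≤ ((k - n + 1 : ℕ) : ℝ) := by
      have h1 : (↑(k/2) : ℝ) ≤ (k : ℝ) / 2 := Nat.cast_div_le
      have h2 : ((k - n + 1 : ℕ) : ℝ) = (k : ℝ) - (n : ℝ) + 1 := by
        have : n ≤ k := by omega
        push_cast [this]; ring
      rw [h2, hn]; linarith
    have hsum' : Summable fun j => h (j + n) := (summable_nat_add_iff n).2 hsum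
    have hfin : ((k - n + 1 : ℕ) : ℝ) * (((k : ℝ)/2) ^ ε * m)
        ≤ ∑' j, h (j + n) := by
      calc ((k - n + 1 : ℕ) : ℝ) * (((k : ℝ)/2) ^ ε * m)
          ≤ ∑ i ∈ Finset.range (k - n + 1), h (i + n) := by
            have := Finset.card_nsmul_le_sum (Finset.range (k - n + 1))
              (fun i => h (i + n)) (((k : ℝ)/2) ^ ε * m) hterm
            simpa [nsmul_eq_mul] using this
        _ ≤ ∑' j, h (j + n) :=
            Summable.sum_le_tsum _ (fun i _ => hh0 _) hsum'
    have hpow : (k : ℝ) ^ (1 + ε) ≤ 4 * ((k : ℝ)/2) ^ (1 + ε) := by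
      have hk' : (k : ℝ) = 2 * ((k : ℝ)/2) := by ring
      conv_lhs => rw [hk', Real.mul_rpow (by norm_num) (by linarith)]
      have h2 : (2 : ℝ) ^ (1 + ε) ≤ (2 : ℝ) ^ (2 : ℝ) :=
        Real.rpow_le_rpow_left_iff (by norm_num) |>.2 (by linarith)
      have h4 : (2 : ℝ) ^ (2 : ℝ) = 4 := by
        rw [show (2:ℝ) = ((2:ℕ):ℝ) by norm_num, Real.rpow_natCast]; norm_num
      nlinarith [Real.rpow_nonneg (le_of_lt hk2) (1 + ε)]
    have hsplit : ((k : ℝ)/2) ^ (1 + ε) = ((k : ℝ)/2) * ((k : ℝ)/2) ^ ε := by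
      rw [Real.rpow_add hk2, Real.rpow_one]
    calc (k : ℝ) ^ (1 + ε) * m ≤ 4 * ((k : ℝ)/2) ^ (1 + ε) * m := by
          exact mul_le_mul_of_nonneg_right hpow hm0
      _ = 4 * (((k : ℝ)/2) * (((k : ℝ)/2) ^ ε * m)) := by rw [hsplit]; ring
      _ ≤ 4 * (((k - n + 1 : ℕ) : ℝ) * (((k : ℝ)/2) ^ ε * m)) := by
          apply mul_le_mul_of_nonneg_left _ (by norm_num)
          exact mul_le_mul_of_nonneg_right hcard
            (mul_nonneg (Real.rpow_nonneg hk2.le _) hm0)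
      _ ≤ 4 * ∑' j, h (j + n) := by linarith
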